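/- Every graph G that is a subdivision of the (k·2^{k+1} × k)-wall contains a bipartite subgraph that is a subdivision of the (2k × k)-wall. -/

import Mathlib

/-- The `(2j × k)`-wall: vertex `(ℓ, i)` is the `(ℓ+1)`-st vertex of the `(i+1)`-st horizontal
path. Horizontal edges join consecutive vertices of each horizontal path; there is a vertical
edge between `(ℓ, i-1)` and `(ℓ, i)` exactly when `ℓ` and `i` have the same parity
(this encodes, in 0-based indexing, the edges `v_{2ℓ}^{(i-1)} v_{2ℓ}^{(i)}` for even `i` and
`v_{2ℓ-1}^{(i-1)} v_{2ℓ-1}^{(i)}` for odd `i` of the 1-based definition). -/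
def wall (j k : ℕ) : SimpleGraph (Fin (2 * j) × Fin k) :=
  SimpleGraph.fromRel (fun p q =>
    (p.2 = q.2 ∧ (p.1 : ℕ) + 1 = q.1) ∨
    (p.1 = q.1 ∧ (p.2 : ℕ) + 1 = q.2 ∧ (p.1 : ℕ) % 2 = (q.2 : ℕ) % 2))

/-- `G` is (isomorphic to) a subdivision of `H`: branch vertices are injected into `G`, each edge
of `H` is realised by a path in `G`, these paths are internally disjoint, avoid branch vertices
internally, and together cover all vertices and edges of `G`. -/
def IsSubdivisionOf {β α : Type*} (G : SimpleGraph β) (H : SimpleGraph α) : Prop :=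
  ∃ f : α ↪ β, ∃ P : ∀ a b, H.Adj a b → G.Walk (f a) (f b),
    (∀ a b (h : H.Adj a b), (P a b h).IsPath) ∧
    (∀ a b (h : H.Adj a b) (c : α), f c ∈ (P a b h).support → c = a ∨ c = b) ∧
    (∀ a b (h : H.Adj a b) a' b' (h' : H.Adj a' b'),
      (s(a, b) : Sym2 α) ≠ s(a', b') →
      ∀ v ∈ (P a b h).support, v ∈ (P a' b' h').support → v = f a ∨ v = f b) ∧
    (∀ v : β, (∃ a, f a = v) ∨ ∃ a, ∃ b, ∃ h : H.Adj a b, v ∈ (P a b h).support) ∧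
    (∀ e ∈ G.edgeSet, ∃ a, ∃ b, ∃ h : H.Adj a b, e ∈ (P a b h).edges)

namespace Stmt8Aux
open SimpleGraph Walk
variable {V : Type*} {G : SimpleGraph V}

lemma isPath_append {u v w : V} {p : G.Walk u v} {q : G.Walk v w}
    (hp : p.IsPath) (hq : q.IsPath)
    (hd : ∀ x, x ∈ p.support → x ∈ q.support → x = v) : (p.append q).IsPath := by
  rw [Walk.isPath_def, Walk.support_append]
  apply List.Nodup.append hp.support_nodup (hq.support_nodup.tail)
  intro x hx hx'
  have hxq : x ∈ q.support := by
    rw [Walk.support_eq_cons q]; exact List.mem_cons_of_mem _ hx'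
  have := hd x hx hxq
  subst this
  have : q.support.Nodup := hq.support_nodup
  rw [Walk.support_eq_cons q] at this
  exact (List.nodup_cons.mp this).1 hx'

section TakeUntil
variable [DecidableEq V]

lemma length_takeUntil_start {u v : V} (p : G.Walk u v) (h : u ∈ p.support) :
    (p.takeUntil u h).length = 0 := by
  cases p with
  | nil => rfl
  | cons r q => simp [Walk.takeUntil]

lemma length_takeUntil_end {u v : V} (p : G.Walk u v) (hp : p.IsPath) (h : v ∈ p.support) :
    (p.takeUntil v h).length = p.length := by
  have hspec := Walk.take_spec p h
  have hdrop : (p.dropUntil v h) = Walk.nil := by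
    have := hp.dropUntil h
    rwa [Walk.isPath_iff_eq_nil] at this
  have := congrArg Walk.length hspec
  rw [Walk.length_append, hdrop] at this
  simpa using this

lemma length_takeUntil_cons {v a c x : V} (r : G.Adj a c) (q : G.Walk c v) (hne : a ≠ x)
    (h : x ∈ (Walk.cons r q).support) (hx : x ∈ q.support) :
    ((Walk.cons r q).takeUntil x h).length = (q.takeUntil x hx).length + 1 := by
  simp [Walk.takeUntil, dif_neg hne]

lemma takeUntil_edge {x y : V} {p : G.Walk x y} (hp : p.IsPath) {u w : V}
    (he : s(u, w) ∈ p.edges) (hu : u ∈ p.support) (hw : w ∈ p.support) :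
    (p.takeUntil u hu).length + 1 = (p.takeUntil w hw).length ∨
    (p.takeUntil w hw).length + 1 = (p.takeUntil u hu).length := by
  induction p with
  | nil => simp at he
  | cons r q ih =>
    rename_i a c d
    rw [Walk.edges_cons, List.mem_cons] at he
    have hpq : q.IsPath := hp.of_cons
    have hanq : a ∉ q.support := ((Walk.cons_isPath_iff _ _).mp hp).2
    rcases he with he | he
    · rw [Sym2.eq_iff] at he
      rcases he with ⟨rfl, rfl⟩ | ⟨rfl, rfl⟩
      · have h0 : ((Walk.cons r q).takeUntil u hu).length = 0 :=
          length_takeUntil_start _ _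
        have hwq : w ∈ q.support := Walk.start_mem_support q
        have hne : u ≠ w := r.ne
        rw [length_takeUntil_cons r q hne hw hwq, h0,
          length_takeUntil_start q hwq]
        left; rfl
      · have h0 : ((Walk.cons r q).takeUntil w hw).length = 0 :=
          length_takeUntil_start _ _
        have huq : u ∈ q.support := Walk.start_mem_support q
        have hne : w ≠ u := r.ne
        rw [length_takeUntil_cons r q hne hu huq, h0,
          length_takeUntil_start q huq]
        right; rfl
    · have huq : u ∈ q.support := Walk.fst_mem_support_of_mem_edges q he
      have hwq : w ∈ q.support := Walk.snd_mem_support_of_mem_edges q he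
      have hau : a ≠ u := fun h => hanq (h ▸ huq)
      have haw : a ≠ w := fun h => hanq (h ▸ hwq)
      rw [length_takeUntil_cons r q hau hu huq, length_takeUntil_cons r q haw hw hwq]
      rcases ih hpq he huq hwq with h1 | h1
      · left; omega
      · right; omega

end TakeUntil

/-- Transfer a `G`-walk whose edges all lie in a subgraph `H` into `H.coe`. -/
def walkCoe (H : G.Subgraph) : ∀ {u v : V} (p : G.Walk u v),
    (∀ x y : V, s(x, y) ∈ p.edges → H.Adj x y) → (hu : u ∈ H.verts) → (hv : v ∈ H.verts) →
    H.coe.Walk ⟨u, hu⟩ ⟨v, hv⟩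
  | _, _, Walk.nil, _, _, _ => Walk.nil
  | _, _, @Walk.cons _ _ a x b r q, he, hu, hv =>
    have hadj : H.Adj a x := he a x (by simp)
    Walk.cons (show H.coe.Adj ⟨a, hu⟩ ⟨x, hadj.snd_mem⟩ from hadj)
      (walkCoe H q (fun s t hb => he s t (by simp [hb])) hadj.snd_mem hv)

@[simp] lemma walkCoe_support_map (H : G.Subgraph) {u v : V} (p : G.Walk u v)
    (he : ∀ x y : V, s(x, y) ∈ p.edges → H.Adj x y) (hu : u ∈ H.verts) (hv : v ∈ H.verts) :
    (walkCoe H p he hu hv).support.map Subtype.val = p.support := by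
  induction p with
  | nil => simp [walkCoe]
  | cons r q ih => simp [walkCoe, ih]

lemma mem_walkCoe_support_iff (H : G.Subgraph) {u v : V} (p : G.Walk u v)
    (he : ∀ x y : V, s(x, y) ∈ p.edges → H.Adj x y) (hu : u ∈ H.verts) (hv : v ∈ H.verts)
    (x : H.verts) : x ∈ (walkCoe H p he hu hv).support ↔ (x : V) ∈ p.support := by
  rw [← walkCoe_support_map H p he hu hv]
  constructor
  · intro hx; exact List.mem_map_of_mem hx
  · intro hx
    rcases List.mem_map.mp hx with ⟨y, hy, hyx⟩
    rwa [Subtype.val_injective hyx] at hy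

lemma walkCoe_edges_map (H : G.Subgraph) {u v : V} (p : G.Walk u v)
    (he : ∀ x y : V, s(x, y) ∈ p.edges → H.Adj x y) (hu : u ∈ H.verts) (hv : v ∈ H.verts) :
    (walkCoe H p he hu hv).edges.map (Sym2.map Subtype.val) = p.edges := by
  induction p with
  | nil => simp [walkCoe]
  | cons r q ih => simp [walkCoe, ih]

lemma mem_walkCoe_edges_iff (H : G.Subgraph) {u v : V} (p : G.Walk u v)
    (he : ∀ x y : V, s(x, y) ∈ p.edges → H.Adj x y) (hu : u ∈ H.verts) (hv : v ∈ H.verts)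
    (x y : H.verts) :
    s(x, y) ∈ (walkCoe H p he hu hv).edges ↔ s((x : V), (y : V)) ∈ p.edges := by
  rw [← walkCoe_edges_map H p he hu hv]
  constructor
  · intro hx
    have : Sym2.map Subtype.val s(x, y) = s((x:V), (y:V)) := by simp
    rw [← this]; exact List.mem_map_of_mem hx
  · intro hx
    rcases List.mem_map.mp hx with ⟨e, hee, hex⟩
    have : e = s(x, y) := by
      apply Sym2.map.injective Subtype.val_injective
      rw [hex]; simp
    rwa [this] at hee

lemma walkCoe_isPath (H : G.Subgraph) {u v : V} {p : G.Walk u v}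
    (he : ∀ x y : V, s(x, y) ∈ p.edges → H.Adj x y) (hu : u ∈ H.verts) (hv : v ∈ H.verts)
    (hp : p.IsPath) : (walkCoe H p he hu hv).IsPath := by
  rw [Walk.isPath_def]
  have := hp.support_nodup
  rw [← walkCoe_support_map H p he hu hv] at this
  exact this.of_map _

lemma wall_adj_iff {j k : ℕ} (a b : Fin (2*j) × Fin k) :
    (wall j k).Adj a b ↔ a ≠ b ∧
      (((a.2 = b.2 ∧ (a.1 : ℕ) + 1 = b.1) ∨
        (a.1 = b.1 ∧ (a.2 : ℕ) + 1 = b.2 ∧ (a.1 : ℕ) % 2 = (b.2 : ℕ) % 2)) ∨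
       ((b.2 = a.2 ∧ (b.1 : ℕ) + 1 = a.1) ∨
        (b.1 = a.1 ∧ (b.2 : ℕ) + 1 = a.2 ∧ (b.1 : ℕ) % 2 = (a.2 : ℕ) % 2))) := by
  rw [wall]
  exact SimpleGraph.fromRel_adj _ a b

variable {k : ℕ}

lemma bigH (t i : ℕ) (h1 : t + 1 < 2*(k*2^k)) (h2 : i < k) :
    (wall (k*2^k) k).Adj (⟨t, by omega⟩, ⟨i, h2⟩) (⟨t+1, h1⟩, ⟨i, h2⟩) := by
  rw [wall_adj_iff]
  refine ⟨?_, Or.inl (Or.inl ⟨rfl, rfl⟩)⟩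
  intro hco
  have := congrArg (fun p => (p.1 : ℕ)) hco
  simp at this

lemma bigV (t i : ℕ) (h1 : t < 2*(k*2^k)) (h2 : i + 1 < k)
    (hpar : t % 2 = (i+1) % 2) :
    (wall (k*2^k) k).Adj (⟨t, h1⟩, ⟨i, by omega⟩) (⟨t, h1⟩, ⟨i+1, h2⟩) := by
  rw [wall_adj_iff]
  refine ⟨?_, Or.inl (Or.inr ⟨rfl, rfl, hpar⟩)⟩
  intro hco
  have := congrArg (fun p => (p.2 : ℕ)) hco
  simp at this

/-- The data of a subdivision (only the first three conditions). -/
structure SubDiv {β α : Type*} (G : SimpleGraph β) (H : SimpleGraph α) where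
  f : α ↪ β
  P : ∀ a b, H.Adj a b → G.Walk (f a) (f b)
  hpath : ∀ a b h, (P a b h).IsPath
  hbranch : ∀ a b h c, f c ∈ (P a b h).support → c = a ∨ c = b
  hdisj : ∀ a b h a' b' h', (s(a,b) : Sym2 α) ≠ s(a',b') →
    ∀ v ∈ (P a b h).support, v ∈ (P a' b' h').support → v = f a ∨ v = f b

section Chain
variable (S : SubDiv G (wall (k*2^k) k))

/-- The subdivision path of the horizontal edge from column `t` to `t+1` in row `i`. -/
def PH (i t : ℕ) (hi : i < k) (h1 : t + 1 < 2*(k*2^k)) :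
    G.Walk (S.f (⟨t, by omega⟩, ⟨i, hi⟩)) (S.f (⟨t+1, h1⟩, ⟨i, hi⟩)) :=
  S.P _ _ (bigH t i h1 hi)

/-- The subdivision path of the vertical edge at column `x` between rows `i`,`i+1`. -/
def PV (x i : ℕ) (hx : x < 2*(k*2^k)) (hi : i + 1 < k) (hpar : x % 2 = (i+1) % 2) :
    G.Walk (S.f (⟨x, hx⟩, ⟨i, by omega⟩)) (S.f (⟨x, hx⟩, ⟨i+1, hi⟩)) :=
  S.P _ _ (bigV x i hx hi hpar)

lemma PH_length_congr (i : ℕ) (hi : i < k) {t t' : ℕ} (h : t = t')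
    (h1 : t + 1 < 2*(k*2^k)) (h1' : t' + 1 < 2*(k*2^k)) :
    (PH S i t hi h1).length = (PH S i t' hi h1').length := by subst h; rfl

/-- The walk along row `i` from column `a` to column `a+m`. -/
def chainW (i : ℕ) (hi : i < k) (a : ℕ) : (m : ℕ) → (hm : a + m < 2*(k*2^k)) →
    G.Walk (S.f (⟨a, by omega⟩, ⟨i, hi⟩)) (S.f (⟨a + m, hm⟩, ⟨i, hi⟩))
  | 0, _ => Walk.nil
  | m+1, hm => (chainW i hi a m (by omega)).append (PH S i (a+m) hi (by omega))

lemma length_chainW_add (i : ℕ) (hi : i < k) (a m1 m2 : ℕ) (h : a + (m1 + m2) < 2*(k*2^k)) :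
    (chainW S i hi a (m1 + m2) h).length =
      (chainW S i hi a m1 (by omega)).length +
      (chainW S i hi (a + m1) m2 (by omega)).length := by
  induction m2 with
  | zero => simp [chainW]
  | succ m ih =>
    show (chainW S i hi a ((m1 + m) + 1) h).length = _
    rw [chainW, Walk.length_append, ih (by omega)]
    conv_rhs => rw [chainW, Walk.length_append]
    have hb := PH_length_congr S i hi (show a+(m1+m) = (a+m1)+m by omega)
      (by omega) (by omega)
    omega

lemma mem_support_chainW (i : ℕ) (hi : i < k) (a m : ℕ) (hm : a + m < 2*(k*2^k)) (v : V) :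
    v ∈ (chainW S i hi a m hm).support ↔
      v = S.f (⟨a, by omega⟩, ⟨i, hi⟩) ∨
      ∃ t, a ≤ t ∧ t < a + m ∧ ∃ (h1 : t + 1 < 2*(k*2^k)),
        v ∈ (PH S i t hi h1).support := by
  induction m with
  | zero =>
    simp only [chainW, Walk.support_nil, List.mem_singleton]
    constructor
    · intro h; exact Or.inl h
    · rintro (h | ⟨t, h1, h2, _⟩)
      · exact h
      · omega
  | succ m ih =>
    rw [chainW, Walk.mem_support_append_iff, ih (by omega)]
    constructor
    · rintro ((h | ⟨t, ht1, ht2, h1, hv⟩) | hv)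
      · exact Or.inl h
      · exact Or.inr ⟨t, ht1, by omega, h1, hv⟩
      · exact Or.inr ⟨a + m, by omega, by omega, by omega, hv⟩
    · rintro (h | ⟨t, ht1, ht2, h1, hv⟩)
      · exact Or.inl (Or.inl h)
      · by_cases htm : t < a + m
        · exact Or.inl (Or.inr ⟨t, ht1, htm, h1, hv⟩)
        · have : t = a + m := by omega
          subst this
          exact Or.inr hv

lemma mem_edges_chainW (i : ℕ) (hi : i < k) (a m : ℕ) (hm : a + m < 2*(k*2^k)) (e : Sym2 V) :
    e ∈ (chainW S i hi a m hm).edges ↔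
      ∃ t, a ≤ t ∧ t < a + m ∧ ∃ (h1 : t + 1 < 2*(k*2^k)),
        e ∈ (PH S i t hi h1).edges := by
  induction m with
  | zero =>
    simp only [chainW, Walk.edges_nil, List.not_mem_nil, false_iff]
    rintro ⟨t, h1, h2, _⟩; omega
  | succ m ih =>
    rw [chainW, Walk.edges_append, List.mem_append, ih (by omega)]
    constructor
    · rintro (⟨t, ht1, ht2, h1, hv⟩ | hv)
      · exact ⟨t, ht1, by omega, h1, hv⟩
      · exact ⟨a + m, by omega, by omega, by omega, hv⟩
    · rintro ⟨t, ht1, ht2, h1, hv⟩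
      by_cases htm : t < a + m
      · exact Or.inl ⟨t, ht1, htm, h1, hv⟩
      · have : t = a + m := by omega
        subst this
        exact Or.inr hv

lemma fmem_chainW (i : ℕ) (hi : i < k) (a m : ℕ) (hm : a + m < 2*(k*2^k))
    (q : Fin (2*(k*2^k)) × Fin k) (hq : S.f q ∈ (chainW S i hi a m hm).support) :
    (q.2 : ℕ) = i ∧ a ≤ (q.1 : ℕ) ∧ (q.1 : ℕ) ≤ a + m := by
  rw [mem_support_chainW] at hq
  rcases hq with hq | ⟨t, ht1, ht2, h1, hq⟩
  · have := S.f.injective hq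
    have h1 := congrArg (fun p => (p.1 : ℕ)) this
    have h2 := congrArg (fun p => (p.2 : ℕ)) this
    simp at h1 h2
    omega
  · rcases S.hbranch _ _ _ q hq with h | h <;>
    · have h1 := congrArg (fun p => (p.1 : ℕ)) h
      have h2 := congrArg (fun p => (p.2 : ℕ)) h
      simp at h1 h2
      omega

lemma isPath_chainW (i : ℕ) (hi : i < k) (a m : ℕ) (hm : a + m < 2*(k*2^k)) :
    (chainW S i hi a m hm).IsPath := by
  induction m with
  | zero => exact Walk.IsPath.nil
  | succ m ih =>
    rw [chainW]
    apply isPath_append (ih (by omega)) (S.hpath _ _ _)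
    intro x hx hx'
    rw [mem_support_chainW] at hx
    have key : ∃ q, x = S.f q ∧ (q.2 : ℕ) = i ∧ a ≤ (q.1:ℕ) ∧ (q.1:ℕ) ≤ a + m := by
      rcases hx with hx | ⟨t, ht1, ht2, h1, hx⟩
      · exact ⟨_, hx, by simp, by simp, by simp <;> omega⟩
      · have hne : (s(((⟨t, by omega⟩ : Fin (2*(k*2^k))), (⟨i, hi⟩ : Fin k)),
            ((⟨t+1, h1⟩ : Fin (2*(k*2^k))), (⟨i, hi⟩ : Fin k))) : Sym2 _) ≠
            s(((⟨a+m, by omega⟩ : Fin (2*(k*2^k))), (⟨i, hi⟩ : Fin k)),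
            ((⟨a+m+1, hm⟩ : Fin (2*(k*2^k))), (⟨i, hi⟩ : Fin k))) := by
          intro hco
          rw [Sym2.eq_iff] at hco
          rcases hco with ⟨h1', h2'⟩ | ⟨h1', h2'⟩
          · have e1 := congrArg (fun p => (p.1 : ℕ)) h1'
            simp at e1; omega
          · have e1 := congrArg (fun p => (p.1 : ℕ)) h1'
            have e2 := congrArg (fun p => (p.1 : ℕ)) h2'
            simp at e1 e2; omega
        rcases S.hdisj _ _ _ _ _ _ hne x hx hx' with h | h
        · exact ⟨_, h, by simp, by simp <;> omega, by simp <;> omega⟩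
        · exact ⟨_, h, by simp, by simp <;> omega, by simp <;> omega⟩
    rcases key with ⟨q, rfl, hq2, hq1a, hq1b⟩
    rcases S.hbranch _ _ _ q hx' with h | h
    · rw [h]
    · exfalso
      have h1 := congrArg (fun p => (p.1 : ℕ)) h
      simp at h1
      omega

end Chain

/-- canonical (oriented) edge relation of the small wall `wall k k`. -/
def crelS {k : ℕ} (a b : Fin (2*k) × Fin k) : Prop :=
  (a.2 = b.2 ∧ (a.1:ℕ)+1 = (b.1:ℕ)) ∨
  (a.1 = b.1 ∧ (a.2:ℕ)+1 = (b.2:ℕ) ∧ (a.1:ℕ)%2 = (b.2:ℕ)%2)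

instance {k : ℕ} (a b : Fin (2*k) × Fin k) : Decidable (crelS a b) :=
  inferInstanceAs (Decidable (_ ∨ _))

lemma crelS_adj {k : ℕ} {a b : Fin (2*k) × Fin k} (h : crelS a b) : (wall k k).Adj a b := by
  rw [wall_adj_iff]
  refine ⟨?_, Or.inl h⟩
  rintro rfl
  rcases h with ⟨_, h2⟩ | ⟨_, h2, _⟩ <;> omega

lemma adj_crelS {k : ℕ} {a b : Fin (2*k) × Fin k} (h : (wall k k).Adj a b) :
    crelS a b ∨ crelS b a := by
  rw [wall_adj_iff] at h
  exact h.2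

lemma crelS_asymm {k : ℕ} {a b : Fin (2*k) × Fin k} (h : crelS a b) (h' : crelS b a) : False := by
  rcases h with ⟨e1, h⟩ | ⟨e1, h, _⟩ <;> rcases h' with ⟨e2, h'⟩ | ⟨e2, h', _⟩ <;> omega

lemma crelS_sym2_ne {k : ℕ} {a b a' b' : Fin (2*k) × Fin k} (h : crelS a b) (h' : crelS a' b')
    (hne : ¬(a = a' ∧ b = b')) : (s(a, b) : Sym2 _) ≠ s(a', b') := by
  intro hco
  rw [Sym2.eq_iff] at hco
  rcases hco with ⟨rfl, rfl⟩ | ⟨rfl, rfl⟩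
  · exact hne ⟨rfl, rfl⟩
  · exact crelS_asymm h h'

/-- Index type for canonical small-wall edges. -/
def SEk (k : ℕ) := {p : (Fin (2*k) × Fin k) × (Fin (2*k) × Fin k) // crelS p.1 p.2}

section Small
variable (S : SubDiv G (wall (k*2^k) k)) (c : ℕ → ℕ)
variable (hc1 : ∀ ℓ, ℓ < 2*k → c ℓ < 2*(k*2^k))
variable (hc2 : ∀ ℓ ℓ', ℓ < ℓ' → ℓ' < 2*k → c ℓ < c ℓ')
variable (hc3 : ∀ ℓ, ℓ < 2*k → c ℓ % 2 = ℓ % 2)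
include hc2

/-- branch vertices of the small wall inside `G`. -/
@[reducible] def gsm (a : Fin (2*k) × Fin k) : V := S.f (⟨c a.1, hc1 a.1 a.1.isLt⟩, a.2)

lemma hc2' {ℓ ℓ' : ℕ} (hℓ : ℓ < 2*k) (hℓ' : ℓ' < 2*k) (h : c ℓ ≤ c ℓ') : ℓ ≤ ℓ' := by
  by_contra hco
  have := hc2 ℓ' ℓ (by omega) hℓ
  omega

lemma gsm_inj {a b : Fin (2*k) × Fin k} (h : gsm S c hc1 a = gsm S c hc1 b) : a = b := by
  have := S.f.injective h
  have h1 := congrArg (fun p => (p.1 : ℕ)) this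
  have h2 := congrArg (fun p => (p.2 : ℕ)) this
  simp only at h1 h2
  have ha := a.1.isLt
  have hb := b.1.isLt
  have : (a.1 : ℕ) = (b.1 : ℕ) := by
    rcases Nat.lt_trichotomy (a.1 : ℕ) (b.1 : ℕ) with hl | hl | hl
    · have := hc2 a.1 b.1 hl hb; omega
    · exact hl
    · have := hc2 b.1 a.1 hl ha; omega
  exact Prod.ext (Fin.ext this) (Fin.ext h2)

include hc3 in
/-- The subdivision walk in `G` realising a canonical small-wall edge. -/
def Q0 (a b : Fin (2*k) × Fin k) (hc : crelS a b) :
    G.Walk (gsm S c hc1 a) (gsm S c hc1 b) :=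
  if hh : a.2 = b.2 ∧ (a.1:ℕ)+1 = (b.1:ℕ) then
    (chainW S a.2 a.2.isLt (c a.1) (c b.1 - c a.1) (by
      have h1 := hc1 b.1 b.1.isLt
      have h2 := hc2 a.1 b.1 (by omega) b.1.isLt
      omega)).copy rfl (by
      have h2 := hc2 a.1 b.1 (by omega) b.1.isLt
      refine congrArg S.f ?_
      rw [Prod.mk.injEq]
      exact ⟨Fin.ext (by simp; omega), Fin.ext (by rw [hh.1])⟩)
  else
    have hv : a.1 = b.1 ∧ (a.2:ℕ)+1 = (b.2:ℕ) ∧ (a.1:ℕ)%2 = (b.2:ℕ)%2 := hc.resolve_left hh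
    (S.P _ _ (bigV (c a.1) a.2 (hc1 a.1 a.1.isLt) (by
        have := b.2.isLt; omega) (by
        rw [hc3 a.1 a.1.isLt]; omega))).copy rfl (by
      refine congrArg S.f ?_
      rw [Prod.mk.injEq]
      refine ⟨Fin.ext ?_, Fin.ext ?_⟩
      · simp only
        rw [hv.1]
      · simpa using hv.2.1)

omit hc2 in
lemma hc2mono {ℓ ℓ' : ℕ} (hc2 : ∀ ℓ ℓ', ℓ < ℓ' → ℓ' < 2*k → c ℓ < c ℓ')
    (h : ℓ ≤ ℓ') (hℓ' : ℓ' < 2*k) : c ℓ ≤ c ℓ' := by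
  rcases Nat.eq_or_lt_of_le h with rfl | h
  · exact le_rfl
  · exact (hc2 ℓ ℓ' h hℓ').le

include hc3 in
lemma isPath_Q0 (a b : Fin (2*k) × Fin k) (hc : crelS a b) :
    (Q0 S c hc1 hc2 hc3 a b hc).IsPath := by
  rw [Q0]
  split_ifs with hh
  · rw [Walk.isPath_copy]
    exact isPath_chainW S _ _ _ _ _
  · rw [Walk.isPath_copy]
    exact S.hpath _ _ _

include hc3 in
lemma support_Q0_cases (a b : Fin (2*k) × Fin k) (hc : crelS a b) (v : V)
    (hv : v ∈ (Q0 S c hc1 hc2 hc3 a b hc).support) :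
    (v = gsm S c hc1 a) ∨
    ((a.2 : ℕ) = (b.2 : ℕ) ∧ (a.1:ℕ)+1 = (b.1:ℕ) ∧
      ∃ t, c a.1 ≤ t ∧ t < c b.1 ∧ ∃ (h1 : t + 1 < 2*(k*2^k)),
        v ∈ (PH S (a.2 : ℕ) t a.2.isLt h1).support) ∨
    ((a.1 : ℕ) = (b.1 : ℕ) ∧ (a.2:ℕ)+1 = (b.2:ℕ) ∧
      ∃ (hx : c a.1 < 2*(k*2^k)) (hi : (a.2:ℕ)+1 < k) (hpar : c a.1 % 2 = ((a.2:ℕ)+1) % 2),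
        v ∈ (PV S (c a.1) (a.2:ℕ) hx hi hpar).support) := by
  rw [Q0] at hv
  split_ifs at hv with hh
  · rw [Walk.support_copy, mem_support_chainW] at hv
    have hab := hc2 a.1 b.1 (by omega) b.1.isLt
    rcases hv with hv | ⟨t, ht1, ht2, h1, hv⟩
    · exact Or.inl hv
    · refine Or.inr (Or.inl ⟨by rw [hh.1], hh.2, t, ht1, by omega, h1, hv⟩)
  · have hvrel := hc.resolve_left hh
    rw [Walk.support_copy] at hv
    refine Or.inr (Or.inr ⟨by rw [hvrel.1], hvrel.2.1, hc1 a.1 a.1.isLt, by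
      have := b.2.isLt; omega, by rw [hc3 a.1 a.1.isLt]; omega, hv⟩)

include hc3 in
lemma fmem_Q0 (a b : Fin (2*k) × Fin k) (hc : crelS a b) (q : Fin (2*(k*2^k)) × Fin k)
    (hq : S.f q ∈ (Q0 S c hc1 hc2 hc3 a b hc).support) :
    ((a.2 : ℕ) = (b.2 : ℕ) ∧ (a.1:ℕ)+1 = (b.1:ℕ) ∧ (q.2:ℕ) = (a.2:ℕ) ∧
      c a.1 ≤ (q.1:ℕ) ∧ (q.1:ℕ) ≤ c b.1) ∨
    ((a.1 : ℕ) = (b.1 : ℕ) ∧ (a.2:ℕ)+1 = (b.2:ℕ) ∧ (q.1:ℕ) = c a.1 ∧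
      ((q.2:ℕ) = (a.2:ℕ) ∨ (q.2:ℕ) = (b.2:ℕ))) := by
  rcases support_Q0_cases S c hc1 hc2 hc3 a b hc _ hq with hv | ⟨h1, h2, t, ht1, ht2, hp1, hv⟩
    | ⟨h1, h2, hx, hi, hpar, hv⟩
  · have := S.f.injective hv
    have e1 := congrArg (fun p => (p.1 : ℕ)) this
    have e2 := congrArg (fun p => (p.2 : ℕ)) this
    simp only [gsm] at e1 e2
    rcases hc with ⟨hh1, hh2⟩ | ⟨hh1, hh2, _⟩
    · left
      have hab := hc2 a.1 b.1 (by omega) b.1.isLt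
      exact ⟨by rw [hh1], hh2, by omega, by omega, by omega⟩
    · right
      have := congrArg (fun x : Fin (2*k) => (x:ℕ)) hh1
      exact ⟨this, hh2, by omega, by omega⟩
  · left
    rcases S.hbranch _ _ _ q hv with h | h <;>
    · have e1 := congrArg (fun p => (p.1 : ℕ)) h
      have e2 := congrArg (fun p => (p.2 : ℕ)) h
      simp only at e1 e2
      exact ⟨h1, h2, by omega, by omega, by omega⟩
  · right
    rcases S.hbranch _ _ _ q hv with h | h <;>
    · have e1 := congrArg (fun p => (p.1 : ℕ)) h
      have e2 := congrArg (fun p => (p.2 : ℕ)) h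
      simp only at e1 e2
      exact ⟨h1, h2, by omega, by omega⟩

include hc3 in
lemma gmem_Q0 (a b : Fin (2*k) × Fin k) (hc : crelS a b) (d : Fin (2*k) × Fin k)
    (hq : gsm S c hc1 d ∈ (Q0 S c hc1 hc2 hc3 a b hc).support) : d = a ∨ d = b := by
  have hfm := fmem_Q0 S c hc1 hc2 hc3 a b hc (⟨c d.1, hc1 d.1 d.1.isLt⟩, d.2) hq
  dsimp only at hfm
  rcases hfm with ⟨h1, h2, h3, h4, h5⟩ | ⟨h1, h2, h3, h4⟩
  · -- horizontal
    have ha1 := hc2' c hc2 d.1.isLt b.1.isLt h5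
    have ha2 := hc2' c hc2 a.1.isLt d.1.isLt h4
    rcases Nat.eq_or_lt_of_le ha2 with he | hlt
    · left
      exact Prod.ext (Fin.ext he.symm) (Fin.ext h3)
    · right
      exact Prod.ext (Fin.ext (by omega)) (Fin.ext (by omega))
  · -- vertical
    have hd1 : (d.1 : ℕ) = (a.1 : ℕ) := by
      have l1 := hc2' c hc2 d.1.isLt a.1.isLt (le_of_eq h3)
      have l2 := hc2' c hc2 a.1.isLt d.1.isLt (le_of_eq h3.symm)
      omega
    rcases h4 with h4 | h4
    · left; exact Prod.ext (Fin.ext hd1) (Fin.ext h4)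
    · right; exact Prod.ext (Fin.ext (by omega)) (Fin.ext h4)

omit hc2 in
lemma sym2_HH_ne {t i t' i' : ℕ} (p1 : t < 2*(k*2^k)) (p2 : t+1 < 2*(k*2^k)) (p3 : i < k)
    (q1 : t' < 2*(k*2^k)) (q2 : t'+1 < 2*(k*2^k)) (q3 : i' < k)
    (h : ¬(t = t' ∧ i = i')) :
    (s(((⟨t,p1⟩ : Fin (2*(k*2^k))), (⟨i,p3⟩ : Fin k)), ((⟨t+1,p2⟩ : Fin (2*(k*2^k))), (⟨i,p3⟩ : Fin k))) : Sym2 _) ≠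
    s(((⟨t',q1⟩ : Fin (2*(k*2^k))), (⟨i',q3⟩ : Fin k)), ((⟨t'+1,q2⟩ : Fin (2*(k*2^k))), (⟨i',q3⟩ : Fin k))) := by
  intro hco
  rw [Sym2.eq_iff] at hco
  rcases hco with ⟨e1, e2⟩ | ⟨e1, e2⟩ <;>
  · have a1 := congrArg (fun p => (p.1 : ℕ)) e1
    have a2 := congrArg (fun p => (p.2 : ℕ)) e1
    have b1 := congrArg (fun p => (p.1 : ℕ)) e2
    simp only at a1 a2 b1
    omega

omit hc2 in
lemma sym2_HV_ne {t i x r : ℕ} (p1 : t < 2*(k*2^k)) (p2 : t+1 < 2*(k*2^k)) (p3 : i < k)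
    (q1 : x < 2*(k*2^k)) (q2 : r < k) (q3 : r+1 < k) :
    (s(((⟨t,p1⟩ : Fin (2*(k*2^k))), (⟨i,p3⟩ : Fin k)), ((⟨t+1,p2⟩ : Fin (2*(k*2^k))), (⟨i,p3⟩ : Fin k))) : Sym2 _) ≠
    s(((⟨x,q1⟩ : Fin (2*(k*2^k))), (⟨r,q2⟩ : Fin k)), ((⟨x,q1⟩ : Fin (2*(k*2^k))), (⟨r+1,q3⟩ : Fin k))) := by
  intro hco
  rw [Sym2.eq_iff] at hco
  rcases hco with ⟨e1, e2⟩ | ⟨e1, e2⟩ <;>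
  · have a1 := congrArg (fun p => (p.1 : ℕ)) e1
    have b1 := congrArg (fun p => (p.1 : ℕ)) e2
    have a2 := congrArg (fun p => (p.2 : ℕ)) e1
    have b2 := congrArg (fun p => (p.2 : ℕ)) e2
    simp only at a1 b1 a2 b2
    omega

omit hc2 in
lemma sym2_VV_ne {x r x' r' : ℕ} (p1 : x < 2*(k*2^k)) (p2 : r < k) (p3 : r+1 < k)
    (q1 : x' < 2*(k*2^k)) (q2 : r' < k) (q3 : r'+1 < k)
    (h : ¬(x = x' ∧ r = r')) :
    (s(((⟨x,p1⟩ : Fin (2*(k*2^k))), (⟨r,p2⟩ : Fin k)), ((⟨x,p1⟩ : Fin (2*(k*2^k))), (⟨r+1,p3⟩ : Fin k))) : Sym2 _) ≠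
    s(((⟨x',q1⟩ : Fin (2*(k*2^k))), (⟨r',q2⟩ : Fin k)), ((⟨x',q1⟩ : Fin (2*(k*2^k))), (⟨r'+1,q3⟩ : Fin k))) := by
  intro hco
  rw [Sym2.eq_iff] at hco
  rcases hco with ⟨e1, e2⟩ | ⟨e1, e2⟩ <;>
  · have a1 := congrArg (fun p => (p.1 : ℕ)) e1
    have a2 := congrArg (fun p => (p.2 : ℕ)) e1
    have b2 := congrArg (fun p => (p.2 : ℕ)) e2
    simp only at a1 a2 b2
    omega

omit hc2 in
lemma bv_ext {q : Fin (2*(k*2^k)) × Fin k} {x : ℕ} (hx : x < 2*(k*2^k)) {r : Fin k}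
    (h1 : (q.1:ℕ) = x) (h2 : (q.2:ℕ) = (r:ℕ)) : q = (⟨x, hx⟩, r) :=
  Prod.ext (Fin.ext h1) (Fin.ext h2)

include hc3 in
lemma fvertex_of_mem_both (a b : Fin (2*k) × Fin k) (hc : crelS a b)
    (a' b' : Fin (2*k) × Fin k) (hc' : crelS a' b') (hne : ¬(a = a' ∧ b = b')) (v : V)
    (hv : v ∈ (Q0 S c hc1 hc2 hc3 a b hc).support)
    (hv' : v ∈ (Q0 S c hc1 hc2 hc3 a' b' hc').support) : ∃ q, v = S.f q := by
  rcases support_Q0_cases S c hc1 hc2 hc3 a b hc _ hv with hv0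
    | ⟨h1, h2, t, ht1, ht2, hp1, hvP⟩ | ⟨h1, h2, hx, hi, hpar, hvP⟩
  · exact ⟨_, hv0⟩
  · rcases support_Q0_cases S c hc1 hc2 hc3 a' b' hc' _ hv' with hv0
      | ⟨g1, g2, t', gt1, gt2, gp1, hv'P⟩ | ⟨g1, g2, gx, gi, gpar, hv'P⟩
    · exact ⟨_, hv0⟩
    · -- PH vs PH
      by_cases hsame : t = t' ∧ (a.2 : ℕ) = (a'.2 : ℕ)
      · exfalso
        obtain ⟨rfl, hrow⟩ := hsame
        have haa : (a.1 : ℕ) ≠ (a'.1 : ℕ) := by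
          intro he
          apply hne
          have ha : a = a' := Prod.ext (Fin.ext he) (Fin.ext hrow)
          refine ⟨ha, Prod.ext (Fin.ext ?_) (Fin.ext ?_)⟩
          · rw [ha] at h2; omega
          · rw [ha] at h1; omega
        rcases Nat.lt_or_ge (a.1 : ℕ) (a'.1 : ℕ) with hl | hl
        · have : c b.1 ≤ c a'.1 := hc2mono c hc2 (by omega) a'.1.isLt
          omega
        · have : c b'.1 ≤ c a.1 := hc2mono c hc2 (by omega) a.1.isLt
          omega
      · rcases S.hdisj _ _ _ _ _ _
          (sym2_HH_ne (by omega) hp1 a.2.isLt (by omega) gp1 a'.2.isLt hsame)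
          v hvP hv'P with h | h
        · exact ⟨_, h⟩
        · exact ⟨_, h⟩
    · -- PH vs PV
      rcases S.hdisj _ _ _ _ _ _
          (sym2_HV_ne (by omega) hp1 a.2.isLt gx (by omega) gi)
          v hvP hv'P with h | h
      · exact ⟨_, h⟩
      · exact ⟨_, h⟩
  · rcases support_Q0_cases S c hc1 hc2 hc3 a' b' hc' _ hv' with hv0
      | ⟨g1, g2, t', gt1, gt2, gp1, hv'P⟩ | ⟨g1, g2, gx, gi, gpar, hv'P⟩
    · exact ⟨_, hv0⟩
    · -- PV vs PH
      rcases S.hdisj _ _ _ _ _ _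
          ((sym2_HV_ne (by omega) gp1 a'.2.isLt hx (by omega) hi).symm)
          v hvP hv'P with h | h
      · exact ⟨_, h⟩
      · exact ⟨_, h⟩
    · -- PV vs PV
      by_cases hsame : c a.1 = c a'.1 ∧ (a.2 : ℕ) = (a'.2 : ℕ)
      · exfalso
        apply hne
        have ha1 : (a.1 : ℕ) = (a'.1 : ℕ) := by
          have l1 := hc2' c hc2 a.1.isLt a'.1.isLt (le_of_eq hsame.1)
          have l2 := hc2' c hc2 a'.1.isLt a.1.isLt (le_of_eq hsame.1.symm)
          omega
        have ha : a = a' := Prod.ext (Fin.ext ha1) (Fin.ext hsame.2)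
        refine ⟨ha, Prod.ext (Fin.ext ?_) (Fin.ext ?_)⟩
        · rw [ha] at h1; omega
        · rw [ha] at h2; omega
      · rcases S.hdisj _ _ _ _ _ _
          (sym2_VV_ne hx (by omega) hi gx (by omega) gi hsame)
          v hvP hv'P with h | h
        · exact ⟨_, h⟩
        · exact ⟨_, h⟩

include hc3 in
lemma disj_Q0 (a b : Fin (2*k) × Fin k) (hc : crelS a b)
    (a' b' : Fin (2*k) × Fin k) (hc' : crelS a' b')
    (hne : (s(a, b) : Sym2 _) ≠ s(a', b')) (v : V)
    (hv : v ∈ (Q0 S c hc1 hc2 hc3 a b hc).support)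
    (hv' : v ∈ (Q0 S c hc1 hc2 hc3 a' b' hc').support) :
    v = gsm S c hc1 a ∨ v = gsm S c hc1 b := by
  have hpair : ¬(a = a' ∧ b = b') := by rintro ⟨rfl, rfl⟩; exact hne rfl
  obtain ⟨q, rfl⟩ := fvertex_of_mem_both S c hc1 hc2 hc3 a b hc a' b' hc' hpair v hv hv'
  have h := fmem_Q0 S c hc1 hc2 hc3 a b hc q hv
  have h' := fmem_Q0 S c hc1 hc2 hc3 a' b' hc' q hv'
  rcases h with ⟨h1, h2, h3, h4, h5⟩ | ⟨h1, h2, h3, h4⟩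
  · rcases h' with ⟨g1, g2, g3, g4, g5⟩ | ⟨g1, g2, g3, g4⟩
    · -- both horizontal, same row
      rcases Nat.lt_trichotomy (a.1 : ℕ) (a'.1 : ℕ) with hl | hl | hl
      · have hle : c b.1 ≤ c a'.1 := hc2mono c hc2 (by omega) a'.1.isLt
        right
        refine congrArg S.f (bv_ext (hc1 b.1 b.1.isLt) ?_ ?_) <;> omega
      · exfalso
        apply hpair
        have hrow : (a.2 : ℕ) = (a'.2 : ℕ) := by omega
        have ha : a = a' := Prod.ext (Fin.ext hl) (Fin.ext hrow)
        refine ⟨ha, Prod.ext (Fin.ext (by omega)) (Fin.ext (by omega))⟩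
      · have hle : c b'.1 ≤ c a.1 := hc2mono c hc2 (by omega) a.1.isLt
        left
        refine congrArg S.f (bv_ext (hc1 a.1 a.1.isLt) ?_ ?_) <;> omega
    · -- e horizontal, e' vertical : q.1 = c a'.1 with c a.1 ≤ q.1 ≤ c b.1
      have l1 := hc2' c hc2 a.1.isLt a'.1.isLt (by omega)
      have l2 := hc2' c hc2 a'.1.isLt b.1.isLt (by omega)
      rcases Nat.eq_or_lt_of_le l1 with he | hlt
      · left
        have : c a.1 = c a'.1 := by rw [he]
        refine congrArg S.f (bv_ext (hc1 a.1 a.1.isLt) ?_ ?_) <;> omega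
      · right
        have hb : (a'.1 : ℕ) = (b.1 : ℕ) := by omega
        have : c a'.1 = c b.1 := by
          have := congrArg (fun x : ℕ => c x) hb
          simpa using this
        refine congrArg S.f (bv_ext (hc1 b.1 b.1.isLt) ?_ ?_) <;> omega
  · -- e vertical
    rcases h4 with h4 | h4
    · left
      refine congrArg S.f (bv_ext (hc1 a.1 a.1.isLt) ?_ ?_) <;> omega
    · right
      have : c a.1 = c b.1 := by
        have := congrArg (fun x : ℕ => c x) h1
        simpa using this
      refine congrArg S.f (bv_ext (hc1 b.1 b.1.isLt) ?_ ?_) <;> omega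

/-- The bipartite subgraph: union of the canonical subdivision walks. -/
@[reducible] def Ghat : G.Subgraph where
  verts := {v | ∃ a, ∃ b, ∃ hc : crelS a b, v ∈ (Q0 S c hc1 hc2 hc3 a b hc).support}
  Adj u w := ∃ a, ∃ b, ∃ hc : crelS a b, s(u,w) ∈ (Q0 S c hc1 hc2 hc3 a b hc).edges
  adj_sub := by rintro u w ⟨a, b, hc, he⟩; exact Walk.adj_of_mem_edges _ he
  edge_vert := by
    rintro u w ⟨a, b, hc, he⟩
    exact ⟨a, b, hc, Walk.fst_mem_support_of_mem_edges _ he⟩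
  symm := by
    constructor
    rintro u w ⟨a, b, hc, he⟩
    exact ⟨a, b, hc, by rw [Sym2.eq_swap]; exact he⟩

include hc3 in
lemma gmem_verts (hk : 1 ≤ k) (d : Fin (2*k) × Fin k) :
    gsm S c hc1 d ∈ (Ghat S c hc1 hc2 hc3).verts := by
  by_cases hd : (d.1 : ℕ) + 1 < 2*k
  · refine ⟨d, (⟨(d.1:ℕ)+1, hd⟩, d.2), Or.inl ⟨rfl, rfl⟩, ?_⟩
    exact Walk.start_mem_support _
  · have hd1 : 1 ≤ (d.1 : ℕ) := by have := d.1.isLt; omega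
    refine ⟨(⟨(d.1:ℕ)-1, by omega⟩, d.2), d, Or.inl ⟨rfl, by simp; omega⟩, ?_⟩
    have := Walk.end_mem_support
      (Q0 S c hc1 hc2 hc3 (⟨(d.1:ℕ)-1, by omega⟩, d.2) d (Or.inl ⟨rfl, by simp; omega⟩))
    exact this

/-- The embedding of small-wall branch vertices into `Ghat`. -/
@[reducible] def femb (hk : 1 ≤ k) : (Fin (2*k) × Fin k) ↪ (Ghat S c hc1 hc2 hc3).verts where
  toFun d := ⟨gsm S c hc1 d, gmem_verts S c hc1 hc2 hc3 hk d⟩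
  inj' := by
    intro d d' h
    exact gsm_inj S c hc1 hc2 (congrArg Subtype.val h)

/-- The subdivision walks inside `Ghat.coe`. -/
def Qfin (hk : 1 ≤ k) (a b : Fin (2*k) × Fin k) (h : (wall k k).Adj a b) :
    (Ghat S c hc1 hc2 hc3).coe.Walk (femb S c hc1 hc2 hc3 hk a) (femb S c hc1 hc2 hc3 hk b) :=
  if hcab : crelS a b then
    walkCoe (Ghat S c hc1 hc2 hc3) (Q0 S c hc1 hc2 hc3 a b hcab) (fun x y he => ⟨a, b, hcab, he⟩)
      (gmem_verts S c hc1 hc2 hc3 hk a) (gmem_verts S c hc1 hc2 hc3 hk b)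
  else
    (walkCoe (Ghat S c hc1 hc2 hc3) (Q0 S c hc1 hc2 hc3 b a ((adj_crelS h).resolve_left hcab))
      (fun x y he => ⟨b, a, (adj_crelS h).resolve_left hcab, he⟩)
      (gmem_verts S c hc1 hc2 hc3 hk b) (gmem_verts S c hc1 hc2 hc3 hk a)).reverse

include hc3 in
lemma mem_supp_Qfin (hk : 1 ≤ k) (a b : Fin (2*k) × Fin k) (h : (wall k k).Adj a b)
    (v : (Ghat S c hc1 hc2 hc3).verts) (hv : v ∈ (Qfin S c hc1 hc2 hc3 hk a b h).support) :
    ∃ x, ∃ y, ∃ hcxy : crelS x y, ((x = a ∧ y = b) ∨ (x = b ∧ y = a)) ∧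
      (v : V) ∈ (Q0 S c hc1 hc2 hc3 x y hcxy).support := by
  rw [Qfin] at hv
  split_ifs at hv with hcab
  · exact ⟨a, b, hcab, Or.inl ⟨rfl, rfl⟩, (mem_walkCoe_support_iff _ _ _ _ _ _).mp hv⟩
  · rw [Walk.support_reverse, List.mem_reverse] at hv
    exact ⟨b, a, (adj_crelS h).resolve_left hcab, Or.inr ⟨rfl, rfl⟩,
      (mem_walkCoe_support_iff _ _ _ _ _ _).mp hv⟩

include hc3 in
lemma isPath_Qfin (hk : 1 ≤ k) (a b : Fin (2*k) × Fin k) (h : (wall k k).Adj a b) :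
    (Qfin S c hc1 hc2 hc3 hk a b h).IsPath := by
  rw [Qfin]
  split_ifs with hcab
  · exact walkCoe_isPath _ _ _ _ (isPath_Q0 S c hc1 hc2 hc3 a b hcab)
  · exact (walkCoe_isPath _ _ _ _ (isPath_Q0 S c hc1 hc2 hc3 b a _)).reverse

include hc3 in
lemma isSubdivision_Ghat (hk : 1 ≤ k) :
    IsSubdivisionOf (Ghat S c hc1 hc2 hc3).coe (wall k k) := by
  refine ⟨femb S c hc1 hc2 hc3 hk, Qfin S c hc1 hc2 hc3 hk, ?_, ?_, ?_, ?_, ?_⟩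
  · exact isPath_Qfin S c hc1 hc2 hc3 hk
  · intro a b h d hd
    obtain ⟨x, y, hcxy, hxy, hmem⟩ := mem_supp_Qfin S c hc1 hc2 hc3 hk a b h _ hd
    have := gmem_Q0 S c hc1 hc2 hc3 x y hcxy d hmem
    rcases hxy with ⟨rfl, rfl⟩ | ⟨rfl, rfl⟩ <;> tauto
  · intro a b h a' b' h' hne v hv hv'
    obtain ⟨x, y, hcxy, hxy, hmem⟩ := mem_supp_Qfin S c hc1 hc2 hc3 hk a b h v hv
    obtain ⟨x', y', hcxy', hxy', hmem'⟩ := mem_supp_Qfin S c hc1 hc2 hc3 hk a' b' h' v hv'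
    have hxyab : (s(x, y) : Sym2 _) = s(a, b) := by
      rcases hxy with ⟨rfl, rfl⟩ | ⟨rfl, rfl⟩
      · rfl
      · exact Sym2.eq_swap
    have hxyab' : (s(x', y') : Sym2 _) = s(a', b') := by
      rcases hxy' with ⟨rfl, rfl⟩ | ⟨rfl, rfl⟩
      · rfl
      · exact Sym2.eq_swap
    have hs : (s(x, y) : Sym2 _) ≠ s(x', y') := by
      rw [hxyab, hxyab']; exact hne
    have hd := disj_Q0 S c hc1 hc2 hc3 x y hcxy x' y' hcxy' hs v hmem hmem'
    rcases hxy with ⟨rfl, rfl⟩ | ⟨rfl, rfl⟩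
    · rcases hd with h0 | h0
      · exact Or.inl (Subtype.ext h0)
      · exact Or.inr (Subtype.ext h0)
    · rcases hd with h0 | h0
      · exact Or.inr (Subtype.ext h0)
      · exact Or.inl (Subtype.ext h0)
  · intro v
    obtain ⟨a, b, hc, hv⟩ := v.2
    right
    refine ⟨a, b, crelS_adj hc, ?_⟩
    rw [Qfin, dif_pos hc]
    exact (mem_walkCoe_support_iff _ _ _ _ _ _).mpr hv
  · intro e he
    induction e using Sym2.ind with
    | _ u w =>
      rw [SimpleGraph.mem_edgeSet] at he
      obtain ⟨a, b, hc, he'⟩ := he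
      exact ⟨a, b, crelS_adj hc, by
        rw [Qfin, dif_pos hc]
        exact (mem_walkCoe_edges_iff _ _ _ _ _ _ _).mpr he'⟩

/-! ### Coloring -/

omit hc2 in
/-- Proof-irrelevant chain length. -/
def DnL (i a m : ℕ) : ℕ :=
  if h : a + m < 2*(k*2^k) ∧ i < k then (chainW S i h.2 a m h.1).length else 0

omit hc2 in
/-- Proof-irrelevant vertical-path length. -/
def PVL (x i : ℕ) : ℕ :=
  if h : x < 2*(k*2^k) ∧ i+1 < k ∧ x % 2 = (i+1) % 2 then (PV S x i h.1 h.2.1 h.2.2).length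
  else 0

omit hc2 in
lemma DnL_add (i a m1 m2 : ℕ) (h : a + (m1+m2) < 2*(k*2^k)) (hi : i < k) :
    DnL S i a (m1+m2) = DnL S i a m1 + DnL S i (a+m1) m2 := by
  rw [DnL, dif_pos ⟨h, hi⟩, DnL, dif_pos ⟨(by omega : a + m1 < 2*(k*2^k)), hi⟩,
    DnL, dif_pos ⟨(by omega : (a + m1) + m2 < 2*(k*2^k)), hi⟩]
  rw [length_chainW_add S i _ a m1 m2 _]

include hc3 in
lemma length_Q0_horiz (a b : Fin (2*k) × Fin k) (hc : crelS a b)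
    (hh : a.2 = b.2 ∧ (a.1:ℕ)+1 = (b.1:ℕ)) :
    (Q0 S c hc1 hc2 hc3 a b hc).length = DnL S (a.2:ℕ) (c a.1) (c b.1 - c a.1) := by
  have g1 := hc1 b.1 b.1.isLt
  have g2 := hc2 a.1 b.1 (by omega) b.1.isLt
  rw [Q0, dif_pos hh, Walk.length_copy, DnL,
    dif_pos ⟨(by omega : c a.1 + (c b.1 - c a.1) < 2*(k*2^k)), a.2.isLt⟩]

include hc3 in
lemma length_Q0_vert (a b : Fin (2*k) × Fin k) (hc : crelS a b)
    (hh : ¬(a.2 = b.2 ∧ (a.1:ℕ)+1 = (b.1:ℕ))) :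
    (Q0 S c hc1 hc2 hc3 a b hc).length = PVL S (c a.1) (a.2:ℕ) := by
  have hv := hc.resolve_left hh
  have g1 := hc1 a.1 a.1.isLt
  have g2 := b.2.isLt
  rw [Q0, dif_neg hh, Walk.length_copy, PVL,
    dif_pos ⟨g1, (by omega : (a.2:ℕ)+1 < k), by rw [hc3 a.1 a.1.isLt]; omega⟩]
  rfl

omit hc2 in
/-- the intended color of the branch vertex `d`. -/
def eps (y : ℕ → ℕ) (d : Fin (2*k) × Fin k) : ℕ :=
  DnL S (d.2:ℕ) 0 (c d.1) + ∑ r ∈ Finset.range (d.2:ℕ), y r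

include hc3 in
lemma EC (y : ℕ → ℕ)
    (hpar : ∀ ℓ i, ℓ < 2*k → i + 1 < k → ℓ % 2 = (i+1) % 2 →
      (DnL S i 0 (c ℓ) + PVL S (c ℓ) i + DnL S (i+1) 0 (c ℓ)) % 2 = y i % 2)
    (a b : Fin (2*k) × Fin k) (hc : crelS a b) :
    (eps S c y a + (Q0 S c hc1 hc2 hc3 a b hc).length) % 2 = eps S c y b % 2 := by
  by_cases hh : a.2 = b.2 ∧ (a.1:ℕ)+1 = (b.1:ℕ)
  · rw [length_Q0_horiz S c hc1 hc2 hc3 a b hc hh]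
    have g1 := hc1 b.1 b.1.isLt
    have g2 := hc2 a.1 b.1 (by omega) b.1.isLt
    have hadd := DnL_add S (a.2:ℕ) 0 (c a.1) (c b.1 - c a.1) (by omega) a.2.isLt
    rw [Nat.zero_add, show c a.1 + (c b.1 - c a.1) = c b.1 by omega] at hadd
    have hrow : (a.2:ℕ) = (b.2:ℕ) := by rw [hh.1]
    rw [eps, eps, ← hrow]
    omega
  · rw [length_Q0_vert S c hc1 hc2 hc3 a b hc hh]
    have hv := hc.resolve_left hh
    have g2 := b.2.isLt
    have hp := hpar a.1 (a.2:ℕ) a.1.isLt (by omega)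
      (by obtain ⟨h1', h2', h3'⟩ := hv; omega)
    have hcc : c a.1 = c b.1 := by
      have : (a.1:ℕ) = (b.1:ℕ) := by rw [hv.1]
      have := congrArg (fun x : ℕ => c x) this
      simpa using this
    have hb2 : (b.2:ℕ) = (a.2:ℕ) + 1 := by omega
    rw [eps, eps, hb2, Finset.sum_range_succ, ← hcc]
    omega

variable [DecidableEq V]

/-- value of the coloring along a given canonical edge walk. -/
def valueE (y : ℕ → ℕ) (e : SEk k) (v : V)
    (hv : v ∈ (Q0 S c hc1 hc2 hc3 e.val.1 e.val.2 e.prop).support) : ℕ :=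
  (eps S c y e.val.1 +
    ((Q0 S c hc1 hc2 hc3 e.val.1 e.val.2 e.prop).takeUntil v hv).length) % 2

lemma valueE_congr (y : ℕ → ℕ) (e e' : SEk k) (v : V) (hv hv') (h : e = e') :
    valueE S c hc1 hc2 hc3 y e v hv = valueE S c hc1 hc2 hc3 y e' v hv' := by
  subst h; rfl

/-- The 2-coloring (as a `ℕ` mod 2). -/
noncomputable def chi (y : ℕ → ℕ) (v : V) : ℕ :=
  letI := Classical.dec (∃ e : SEk k, v ∈ (Q0 S c hc1 hc2 hc3 e.val.1 e.val.2 e.prop).support)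
  if h : ∃ e : SEk k, v ∈ (Q0 S c hc1 hc2 hc3 e.val.1 e.val.2 e.prop).support then
    valueE S c hc1 hc2 hc3 y h.choose v h.choose_spec
  else 0

include hc3 in
lemma value_gsm (y : ℕ → ℕ)
    (hpar : ∀ ℓ i, ℓ < 2*k → i + 1 < k → ℓ % 2 = (i+1) % 2 →
      (DnL S i 0 (c ℓ) + PVL S (c ℓ) i + DnL S (i+1) 0 (c ℓ)) % 2 = y i % 2)
    (a b : Fin (2*k) × Fin k) (hc : crelS a b) (d : Fin (2*k) × Fin k)
    (hv : gsm S c hc1 d ∈ (Q0 S c hc1 hc2 hc3 a b hc).support) :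
    (eps S c y a + ((Q0 S c hc1 hc2 hc3 a b hc).takeUntil _ hv).length) % 2
      = eps S c y d % 2 := by
  rcases gmem_Q0 S c hc1 hc2 hc3 a b hc d hv with rfl | rfl
  · rw [length_takeUntil_start]
    omega
  · rw [length_takeUntil_end _ (isPath_Q0 S c hc1 hc2 hc3 a d hc)]
    exact EC S c hc1 hc2 hc3 y hpar a d hc


include hc3 in
lemma value_gsm' (y : ℕ → ℕ)
    (hpar : ∀ ℓ i, ℓ < 2*k → i + 1 < k → ℓ % 2 = (i+1) % 2 →
      (DnL S i 0 (c ℓ) + PVL S (c ℓ) i + DnL S (i+1) 0 (c ℓ)) % 2 = y i % 2)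
    (a b : Fin (2*k) × Fin k) (hc : crelS a b) (v : V)
    (hv : v ∈ (Q0 S c hc1 hc2 hc3 a b hc).support) (d : Fin (2*k) × Fin k)
    (hd : v = gsm S c hc1 d) :
    (eps S c y a + ((Q0 S c hc1 hc2 hc3 a b hc).takeUntil v hv).length) % 2
      = eps S c y d % 2 := by
  subst hd
  exact value_gsm S c hc1 hc2 hc3 y hpar a b hc d hv

include hc3 in
lemma chi_eq (y : ℕ → ℕ)
    (hpar : ∀ ℓ i, ℓ < 2*k → i + 1 < k → ℓ % 2 = (i+1) % 2 →
      (DnL S i 0 (c ℓ) + PVL S (c ℓ) i + DnL S (i+1) 0 (c ℓ)) % 2 = y i % 2)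
    (e : SEk k) (v : V)
    (hv : v ∈ (Q0 S c hc1 hc2 hc3 e.val.1 e.val.2 e.prop).support) :
    chi S c hc1 hc2 hc3 y v = valueE S c hc1 hc2 hc3 y e v hv := by
  have hex : ∃ e' : SEk k, v ∈ (Q0 S c hc1 hc2 hc3 e'.val.1 e'.val.2 e'.prop).support := ⟨e, hv⟩
  rw [chi, dif_pos hex]
  by_cases he : hex.choose = e
  · exact valueE_congr S c hc1 hc2 hc3 y _ e v hex.choose_spec hv he
  · have hvalne : hex.choose.val ≠ e.val := fun hc' => he (Subtype.ext hc')
    have hne : ¬(hex.choose.val.1 = e.val.1 ∧ hex.choose.val.2 = e.val.2) := by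
      intro hco
      exact hvalne (Prod.ext hco.1 hco.2)
    have hs := crelS_sym2_ne hex.choose.prop e.prop hne
    have hd : ∃ d, v = gsm S c hc1 d := by
      rcases disj_Q0 S c hc1 hc2 hc3 _ _ hex.choose.prop _ _ e.prop hs v
        hex.choose_spec hv with h0 | h0
      · exact ⟨_, h0⟩
      · exact ⟨_, h0⟩
    obtain ⟨d, hd⟩ := hd
    rw [show valueE S c hc1 hc2 hc3 y hex.choose v hex.choose_spec =
      (eps S c y hex.choose.val.1 + ((Q0 S c hc1 hc2 hc3 hex.choose.val.1 hex.choose.val.2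
        hex.choose.prop).takeUntil v hex.choose_spec).length) % 2 from rfl]
    rw [show valueE S c hc1 hc2 hc3 y e v hv =
      (eps S c y e.val.1 + ((Q0 S c hc1 hc2 hc3 e.val.1 e.val.2
        e.prop).takeUntil v hv).length) % 2 from rfl]
    rw [value_gsm' S c hc1 hc2 hc3 y hpar _ _ hex.choose.prop v hex.choose_spec d hd,
      value_gsm' S c hc1 hc2 hc3 y hpar _ _ e.prop v hv d hd]

include hc3 in
lemma chi_proper (y : ℕ → ℕ)
    (hpar : ∀ ℓ i, ℓ < 2*k → i + 1 < k → ℓ % 2 = (i+1) % 2 →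
      (DnL S i 0 (c ℓ) + PVL S (c ℓ) i + DnL S (i+1) 0 (c ℓ)) % 2 = y i % 2)
    (u w : V) (e : SEk k)
    (he : s(u, w) ∈ (Q0 S c hc1 hc2 hc3 e.val.1 e.val.2 e.prop).edges) :
    chi S c hc1 hc2 hc3 y u % 2 ≠ chi S c hc1 hc2 hc3 y w % 2 := by
  have hu := Walk.fst_mem_support_of_mem_edges _ he
  have hw := Walk.snd_mem_support_of_mem_edges _ he
  rw [chi_eq S c hc1 hc2 hc3 y hpar e u hu, chi_eq S c hc1 hc2 hc3 y hpar e w hw]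
  simp only [valueE]
  rcases takeUntil_edge (isPath_Q0 S c hc1 hc2 hc3 e.val.1 e.val.2 e.prop) he hu hw
    with h1 | h1 <;> omega

include hc3 in
lemma colorable_Ghat (y : ℕ → ℕ)
    (hpar : ∀ ℓ i, ℓ < 2*k → i + 1 < k → ℓ % 2 = (i+1) % 2 →
      (DnL S i 0 (c ℓ) + PVL S (c ℓ) i + DnL S (i+1) 0 (c ℓ)) % 2 = y i % 2) :
    (Ghat S c hc1 hc2 hc3).coe.Colorable 2 := by
  refine ⟨SimpleGraph.Coloring.mk
    (fun v => ⟨chi S c hc1 hc2 hc3 y v.val % 2, by omega⟩) ?_⟩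
  intro u w hadj hco
  obtain ⟨a, b, hc, he⟩ := hadj
  have hval := congrArg Fin.val hco
  exact chi_proper S c hc1 hc2 hc3 y hpar u.val w.val ⟨(a, b), hc⟩ he hval
end Small
end Stmt8Aux


/-- Every graph that is a subdivision of the `(k·2^{k+1} × k)`-wall contains a bipartite
subgraph which is a subdivision of the `(2k × k)`-wall. -/
theorem stmt8 (k : ℕ) (hk : 1 ≤ k) {β : Type*} (G : SimpleGraph β)
    (h : IsSubdivisionOf G (wall (k * 2 ^ k) k)) :
    ∃ Ghat : G.Subgraph, Ghat.coe.Colorable 2 ∧ IsSubdivisionOf Ghat.coe (wall k k) := by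
  classical
  obtain ⟨f, P, h1, h2, h3, -, -⟩ := h
  set S : Stmt8Aux.SubDiv G (wall (k*2^k) k) := ⟨f, P, h1, h2, h3⟩ with hS
  set sig : Fin (k*2^k) → (Fin (k-1) → Fin 2) := fun s i =>
    ⟨(Stmt8Aux.DnL S (i:ℕ) 0 (2*(s:ℕ) + ((i:ℕ)+1) % 2)
      + Stmt8Aux.PVL S (2*(s:ℕ) + ((i:ℕ)+1) % 2) (i:ℕ)
      + Stmt8Aux.DnL S ((i:ℕ)+1) 0 (2*(s:ℕ) + ((i:ℕ)+1) % 2)) % 2, by omega⟩ with hsig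
  have hcard : (Finset.univ : Finset (Fin (k-1) → Fin 2)).card * (2*k)
      ≤ (Finset.univ : Finset (Fin (k*2^k))).card := by
    rw [Finset.card_univ, Finset.card_univ, Fintype.card_fun,
      Fintype.card_fin, Fintype.card_fin, Fintype.card_fin]
    have hkk : k - 1 + 1 = k := by omega
    calc 2^(k-1) * (2*k) = 2^(k-1) * 2 * k := by ring
    _ = 2^(k-1+1) * k := by rw [pow_succ]
    _ = k * 2^k := by rw [hkk]; ring
    _ ≤ k * 2^k := le_rfl
  obtain ⟨y0, -, hy0⟩ := Finset.exists_le_card_fiber_of_mul_le_card_of_maps_to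
    (fun a _ => Finset.mem_univ (sig a)) ⟨_, Finset.mem_univ (fun _ => (0 : Fin 2))⟩ hcard
  obtain ⟨T, hTsub, hTcard⟩ := Finset.exists_subset_card_eq hy0
  set emb := T.orderEmbOfFin hTcard with hemb
  set selN : ℕ → ℕ := fun ℓ => if hℓ : ℓ < 2*k then (emb ⟨ℓ, hℓ⟩ : ℕ) else 0 with hselN
  set c : ℕ → ℕ := fun ℓ => 2 * selN ℓ + ℓ % 2 with hcdef
  set y : ℕ → ℕ := fun i => if hi : i < k - 1 then (y0 ⟨i, hi⟩ : ℕ) else 0 with hy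
  have hc1 : ∀ ℓ, ℓ < 2*k → c ℓ < 2*(k*2^k) := by
    intro ℓ hℓ
    have hs1 : selN ℓ < k*2^k := by
      rw [hselN]; dsimp only; rw [dif_pos hℓ]; exact (emb ⟨ℓ, hℓ⟩).isLt
    have hm : ℓ % 2 < 2 := Nat.mod_lt _ (by omega)
    rw [hcdef]; dsimp only; omega
  have hc2 : ∀ ℓ ℓ', ℓ < ℓ' → ℓ' < 2*k → c ℓ < c ℓ' := by
    intro ℓ ℓ' hlt hℓ'
    have hs1 : selN ℓ < selN ℓ' := by
      rw [hselN]; dsimp only; rw [dif_pos (by omega : ℓ < 2*k), dif_pos hℓ']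
      exact emb.strictMono (Fin.mk_lt_mk.mpr hlt)
    have hm : ℓ % 2 < 2 := Nat.mod_lt _ (by omega)
    have hm' : ℓ' % 2 < 2 := Nat.mod_lt _ (by omega)
    rw [hcdef]; dsimp only; omega
  have hc3 : ∀ ℓ, ℓ < 2*k → c ℓ % 2 = ℓ % 2 := by
    intro ℓ hℓ
    rw [hcdef]; dsimp only; omega
  have hpar : ∀ ℓ i, ℓ < 2*k → i + 1 < k → ℓ % 2 = (i+1) % 2 →
      (Stmt8Aux.DnL S i 0 (c ℓ) + Stmt8Aux.PVL S (c ℓ) i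
        + Stmt8Aux.DnL S (i+1) 0 (c ℓ)) % 2 = y i % 2 := by
    intro ℓ i hℓ hik hpar2
    have hik' : i < k - 1 := by omega
    have hmem : emb ⟨ℓ, hℓ⟩ ∈ T := Finset.orderEmbOfFin_mem T hTcard ⟨ℓ, hℓ⟩
    have hfib := hTsub hmem
    rw [Finset.mem_filter] at hfib
    have hval := congrArg Fin.val (congrFun hfib.2 ⟨i, hik'⟩)
    rw [hsig] at hval
    dsimp only at hval
    have hcc : c ℓ = 2*(emb ⟨ℓ, hℓ⟩ : ℕ) + (i+1) % 2 := by
      rw [hcdef]; dsimp only; rw [hselN]; dsimp only; rw [dif_pos hℓ]; omega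
    rw [hcc]
    have hyy : y i = (y0 ⟨i, hik'⟩ : ℕ) := by
      rw [hy]; dsimp only; rw [dif_pos hik']
    have hlt2 : (y0 ⟨i, hik'⟩ : ℕ) < 2 := (y0 _).isLt
    omega
  exact ⟨Stmt8Aux.Ghat S c hc1 hc2 hc3,
    Stmt8Aux.colorable_Ghat S c hc1 hc2 hc3 y hpar,
    Stmt8Aux.isSubdivision_Ghat S c hc1 hc2 hc3 hk⟩
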